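/- Let p be an odd prime and suppose E, A ⊆ 𝔽_p^3 form a spectral pair with |E| = |A| = mp, where 2 ≤ m ≤ p − 1. Then |E ∩ P| ≤ p and |A ∩ P| ≤ p for every plane P of 𝔽_p^3 (every coset of every two-dimensional subspace). -/

import Mathlib

open Finset Matrix Polynomial

/-- The character `x ↦ e^{2πi (x·a)/p}` on `𝔽_p^d`. -/
noncomputable def chr (p : ℕ) {d : ℕ} (a x : Fin d → ZMod p) : ℂ :=
  Complex.exp (2 * (Real.pi : ℂ) * Complex.I *
    ((ZMod.val (∑ i, x i * a i) : ℕ) : ℂ) / (p : ℂ))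

/-- `(E, A)` is a spectral pair: the characters `χ_a`, `a ∈ A`, restricted to `E`,
are pairwise orthogonal, span `L²(E)`, and are linearly independent, i.e. they
form an orthogonal basis of `L²(E)`. -/
def IsSpectralPair (p : ℕ) {d : ℕ} (E A : Finset (Fin d → ZMod p)) : Prop :=
  (∀ a ∈ A, ∀ b ∈ A, a ≠ b →
    ∑ x ∈ E, chr p a x * (starRingEnd ℂ) (chr p b x) = 0) ∧
  (∀ f : E → ℂ, ∃ c : A → ℂ, ∀ x : E, f x = ∑ a : A, c a * chr p a.1 x.1) ∧
  (∀ c : A → ℂ, (∀ x : E, ∑ a : A, c a * chr p a.1 x.1 = 0) → ∀ a, c a = 0)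

/-- `E` is a spectral set. -/
def IsSpectral (p : ℕ) {d : ℕ} (E : Finset (Fin d → ZMod p)) : Prop :=
  ∃ A, IsSpectralPair p E A

/-- `E` tiles `𝔽_p^d` by translation. -/
def Tiles (p : ℕ) {d : ℕ} (E : Finset (Fin d → ZMod p)) : Prop :=
  ∃ A : Finset (Fin d → ZMod p),
    ∀ x, (∑ a ∈ A, if x - a ∈ E then (1 : ℕ) else 0) = 1

/-- `E` determines the direction (one-dimensional subspace) `D`. -/
def Determines (p : ℕ) {d : ℕ} (E : Finset (Fin d → ZMod p))
    (D : Submodule (ZMod p) (Fin d → ZMod p)) : Prop :=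
  ∃ e₁ ∈ E, ∃ e₂ ∈ E, e₁ ≠ e₂ ∧ e₁ - e₂ ∈ D

/-- The Fourier transform of the indicator function of `E`. -/
noncomputable def ftE (p : ℕ) {d : ℕ} (E : Finset (Fin d → ZMod p))
    (ξ : Fin d → ZMod p) : ℂ :=
  ((p : ℂ) ^ d)⁻¹ * ∑ x ∈ E, Complex.exp (-(2 * (Real.pi : ℂ) * Complex.I *
    ((ZMod.val (∑ i, x i * ξ i) : ℕ) : ℂ) / (p : ℂ)))

/-- The orthogonal set `S^⊥ = {x : x · y = 0 for all y ∈ S}`. -/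
def perpSet (p : ℕ) {d : ℕ} (S : Submodule (ZMod p) (Fin d → ZMod p)) :
    Set (Fin d → ZMod p) :=
  {x | ∀ y ∈ S, ∑ i, x i * y i = 0}


noncomputable def ee (p : ℕ) (s : ZMod p) : ℂ :=
  Complex.exp (2 * (Real.pi : ℂ) * Complex.I * ((ZMod.val s : ℕ) : ℂ) / (p : ℂ))

lemma ee_eq_pow (p : ℕ) (s : ZMod p) :
    ee p s = Complex.exp (2 * (Real.pi : ℂ) * Complex.I / (p : ℂ)) ^ (ZMod.val s) := by
  rw [ee, ← Complex.exp_nat_mul]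
  ring_nf

lemma zeta_pow_p (p : ℕ) (hp : p ≠ 0) :
    Complex.exp (2 * (Real.pi : ℂ) * Complex.I / (p : ℂ)) ^ p = 1 := by
  have hpc : (p : ℂ) ≠ 0 := Nat.cast_ne_zero.mpr hp
  rw [← Complex.exp_nat_mul]
  have : (p : ℂ) * (2 * (Real.pi : ℂ) * Complex.I / (p : ℂ)) = 2 * (Real.pi : ℂ) * Complex.I := by
    field_simp
  rw [this, Complex.exp_two_pi_mul_I]

lemma zeta_pow_mod (p : ℕ) (hp : p ≠ 0) (n : ℕ) :
    Complex.exp (2 * (Real.pi : ℂ) * Complex.I / (p : ℂ)) ^ n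
      = Complex.exp (2 * (Real.pi : ℂ) * Complex.I / (p : ℂ)) ^ (n % p) := by
  conv_lhs => rw [← Nat.mod_add_div n p]
  rw [pow_add, pow_mul, zeta_pow_p p hp, one_pow, mul_one]

lemma ee_add (p : ℕ) [NeZero p] (s t : ZMod p) : ee p (s + t) = ee p s * ee p t := by
  have hp : p ≠ 0 := NeZero.ne p
  rw [ee_eq_pow, ee_eq_pow, ee_eq_pow, ← pow_add, ZMod.val_add, ← zeta_pow_mod p hp]

lemma ee_zero (p : ℕ) : ee p 0 = 1 := by
  simp [ee, ZMod.val_zero]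

lemma ee_ne_zero (p : ℕ) (s : ZMod p) : ee p s ≠ 0 := Complex.exp_ne_zero _

lemma ee_conj (p : ℕ) [NeZero p] (s : ZMod p) : (starRingEnd ℂ) (ee p s) = ee p (-s) := by
  have h1 : (starRingEnd ℂ) (ee p s) * ee p s = 1 := by
    rw [ee, ← Complex.exp_conj, ← Complex.exp_add]
    have : (starRingEnd ℂ) (2 * (Real.pi : ℂ) * Complex.I * ((ZMod.val s : ℕ) : ℂ) / (p : ℂ))
        = -(2 * (Real.pi : ℂ) * Complex.I * ((ZMod.val s : ℕ) : ℂ) / (p : ℂ)) := by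
      simp only [map_div₀, _root_.map_mul, Complex.conj_I, map_natCast, Complex.conj_ofReal, map_ofNat]
      ring
    rw [this, neg_add_cancel, Complex.exp_zero]
  have h2 : ee p (-s) * ee p s = 1 := by
    rw [← ee_add, neg_add_cancel, ee_zero]
  exact mul_right_cancel₀ (ee_ne_zero p s) (h1.trans h2.symm)

lemma ee_sub_conj (p : ℕ) [NeZero p] (s t : ZMod p) :
    ee p s * (starRingEnd ℂ) (ee p t) = ee p (s - t) := by
  rw [ee_conj, sub_eq_add_neg, ee_add]

lemma sum_val_range (p : ℕ) [NeZero p] (f : ℕ → ℂ) :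
    ∑ t : ZMod p, f (ZMod.val t) = ∑ i ∈ Finset.range p, f i := by
  apply Finset.sum_nbij' (fun t => ZMod.val t) (fun i => (i : ZMod p))
  · intro t _; exact Finset.mem_range.mpr (ZMod.val_lt t)
  · intro i _; exact Finset.mem_univ _
  · intro t _; exact ZMod.natCast_rightInverse t
  · intro i hi; exact ZMod.val_cast_of_lt (Finset.mem_range.mp hi)
  · intro t _; rfl

lemma fiber_const (p : ℕ) [NeZero p] (hp : p.Prime) (n : ZMod p → ℕ)
    (h : ∑ t : ZMod p, (n t : ℂ) *
        Complex.exp (2 * (Real.pi : ℂ) * Complex.I / (p : ℂ)) ^ (ZMod.val t) = 0) :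
    ∀ t, n t = n 0 := by
  haveI : Fact p.Prime := ⟨hp⟩
  set ζ : ℂ := Complex.exp (2 * (Real.pi : ℂ) * Complex.I / (p : ℂ)) with hζdef
  have hζ : IsPrimitiveRoot ζ p := Complex.isPrimitiveRoot_exp p hp.ne_zero
  have hgeom : ∑ t : ZMod p, ζ ^ (ZMod.val t) = 0 := by
    rw [sum_val_range p (fun i => ζ ^ i)]
    exact hζ.geom_sum_eq_zero hp.one_lt
  set Q : ℚ[X] := ∑ t : ZMod p, C ((n t : ℚ) - (n 0 : ℚ)) * X ^ (ZMod.val t) with hQdef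
  have hcoeff : ∀ t₀ : ZMod p, Q.coeff (ZMod.val t₀) = (n t₀ : ℚ) - (n 0 : ℚ) := by
    intro t₀
    rw [hQdef, finset_sum_coeff]
    have : ∀ t : ZMod p, (C ((n t : ℚ) - (n 0 : ℚ)) * X ^ (ZMod.val t)).coeff (ZMod.val t₀)
        = if t = t₀ then (n t : ℚ) - (n 0 : ℚ) else 0 := by
      intro t
      rw [coeff_C_mul, coeff_X_pow]
      by_cases h : t = t₀
      · simp [h]
      · have : ZMod.val t₀ ≠ ZMod.val t := fun hv => h ((ZMod.val_injective p) hv.symm)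
        simp [h, this]
    rw [Finset.sum_congr rfl (fun t _ => this t), Finset.sum_ite_eq' Finset.univ t₀]
    simp
  have haev : aeval ζ Q = 0 := by
    rw [hQdef]
    simp only [map_sum, _root_.map_mul, map_pow, aeval_C, aeval_X]
    have : ∀ t : ZMod p, (algebraMap ℚ ℂ) ((n t : ℚ) - (n 0 : ℚ)) * ζ ^ (ZMod.val t)
        = (n t : ℂ) * ζ ^ (ZMod.val t) - (n 0 : ℂ) * ζ ^ (ZMod.val t) := by
      intro t; push_cast; ring
    rw [Finset.sum_congr rfl (fun t _ => this t), Finset.sum_sub_distrib, h,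
      ← Finset.mul_sum, hgeom]
    ring
  have hQ0 : Q = 0 := by
    by_contra hQne
    have hdvd : minpoly ℚ ζ ∣ Q := minpoly.dvd ℚ ζ haev
    rw [← Polynomial.cyclotomic_eq_minpoly_rat hζ hp.pos] at hdvd
    obtain ⟨r, hr⟩ := hdvd
    have hcne : cyclotomic p ℚ ≠ 0 := cyclotomic_ne_zero p ℚ
    have hrne : r ≠ 0 := fun h0 => hQne (by rw [hr, h0, mul_zero])
    have hdegQ : Q.natDegree ≤ p - 1 := by
      apply Polynomial.natDegree_sum_le_of_forall_le
      intro t _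
      refine le_trans (natDegree_C_mul_X_pow_le _ _) ?_
      have := ZMod.val_lt t; omega
    have hdegmul : Q.natDegree = (p - 1) + r.natDegree := by
      rw [hr, natDegree_mul hcne hrne, natDegree_cyclotomic, Nat.totient_prime hp]
    have hr0 : r.natDegree = 0 := by omega
    obtain ⟨k, hk⟩ : ∃ k, r = C k := ⟨r.coeff 0, Polynomial.eq_C_of_natDegree_eq_zero hr0⟩
    have hc0 : (cyclotomic p ℚ).coeff 0 = 1 := by
      rw [cyclotomic_prime ℚ p, finset_sum_coeff]
      have : ∀ i ∈ Finset.range p, ((X : ℚ[X]) ^ i).coeff 0 = if 0 = i then 1 else 0 := by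
        intro i _; rw [coeff_X_pow]
      rw [Finset.sum_congr rfl this, Finset.sum_ite_eq (Finset.range p) 0]
      simp [hp.pos]
    have hQc0 : Q.coeff 0 = 0 := by
      have := hcoeff 0
      rw [ZMod.val_zero] at this
      rw [this]; ring
    have hk0 : k = 0 := by
      have := hQc0
      rw [hr, hk, Polynomial.mul_coeff_zero, hc0, coeff_C] at this
      simpa using this
    exact hrne (by rw [hk, hk0, map_zero])
  intro t
  have h2 := hcoeff t
  rw [hQ0, coeff_zero] at h2
  have : (n t : ℚ) = (n 0 : ℚ) := by linarith
  exact_mod_cast this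

lemma equi (p m : ℕ) (hp : p.Prime) {α : Type*} [DecidableEq α] (S : Finset α)
    (g : α → ZMod p) (hcard : S.card = m * p)
    (h0 : ∑ x ∈ S, ee p (g x) = 0) :
    ∀ t : ZMod p, (S.filter (fun x => g x = t)).card = m := by
  haveI : NeZero p := ⟨hp.ne_zero⟩
  set n : ZMod p → ℕ := fun t => (S.filter (fun x => g x = t)).card with hn
  have hfib : ∑ t : ZMod p, (n t : ℂ) *
      Complex.exp (2 * (Real.pi : ℂ) * Complex.I / (p : ℂ)) ^ (ZMod.val t) = 0 := by
    rw [← h0, ← Finset.sum_fiberwise S g (fun x => ee p (g x))]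
    refine Finset.sum_congr rfl fun t _ => ?_
    rw [← ee_eq_pow]
    have : ∀ x ∈ S.filter (fun x => g x = t), ee p (g x) = ee p t := by
      intro x hx; rw [(Finset.mem_filter.mp hx).2]
    rw [Finset.sum_congr rfl this, Finset.sum_const, nsmul_eq_mul]
  have hconst := fiber_const p hp n hfib
  have htot : ∑ t : ZMod p, n t = m * p := by
    rw [← hcard]
    exact (Finset.card_eq_sum_card_fiberwise (fun x _ => Finset.mem_univ (g x))).symm
  have : (Fintype.card (ZMod p)) * n 0 = m * p := by
    rw [← htot, Finset.sum_congr rfl (fun t _ => hconst t), Finset.sum_const, smul_eq_mul,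
      Fintype.card]
  rw [ZMod.card] at this
  have hn0 : n 0 = m := by
    have hppos := hp.pos
    have : p * n 0 = p * m := by rw [this]; ring
    exact Nat.eq_of_mul_eq_mul_left hppos this
  intro t; rw [show (S.filter (fun x => g x = t)).card = n t from rfl, hconst t, hn0]

lemma chr_eq (p : ℕ) {d : ℕ} (a x : Fin d → ZMod p) : chr p a x = ee p (∑ i, x i * a i) := rfl

lemma chr_mul_conj (p : ℕ) [NeZero p] {d : ℕ} (a b x : Fin d → ZMod p) :
    chr p a x * (starRingEnd ℂ) (chr p b x) = ee p (∑ i, x i * (a - b) i) := by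
  rw [chr_eq, chr_eq, ee_sub_conj]
  congr 1
  rw [← Finset.sum_sub_distrib]
  exact Finset.sum_congr rfl fun i _ => by simp [Pi.sub_apply]; ring

lemma chr_point_conj (p : ℕ) [NeZero p] {d : ℕ} (a x y : Fin d → ZMod p) :
    chr p a x * (starRingEnd ℂ) (chr p a y) = ee p (∑ i, a i * (x - y) i) := by
  rw [chr_eq, chr_eq, ee_sub_conj]
  congr 1
  rw [← Finset.sum_sub_distrib]
  exact Finset.sum_congr rfl fun i _ => by simp [Pi.sub_apply]; ring

lemma rows_orth (p : ℕ) [NeZero p] {d : ℕ} (E A : Finset (Fin d → ZMod p))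
    (hpair : IsSpectralPair p E A) (hcard : E.card = A.card) (hne : E.card ≠ 0) :
    ∀ x ∈ E, ∀ y ∈ E, x ≠ y → ∑ a ∈ A, ee p (∑ i, a i * (x - y) i) = 0 := by
  classical
  intro x hx y hy hxy
  set M : Matrix {z // z ∈ E} {a // a ∈ A} ℂ := fun z a => chr p a.1 z.1 with hM
  set c : ℂ := (E.card : ℂ) with hc
  have hcne : c ≠ 0 := Nat.cast_ne_zero.mpr hne
  have habs : ∀ (a z : Fin d → ZMod p), chr p a z * (starRingEnd ℂ) (chr p a z) = 1 := by
    intro a z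
    rw [chr_mul_conj, sub_self]
    have : ∀ i ∈ Finset.univ, z i * (0 : Fin d → ZMod p) i = 0 := by
      intro i _; simp
    rw [Finset.sum_congr rfl this, Finset.sum_const, smul_zero, ee_zero]
  have h1 : Mᴴ * M = c • 1 := by
    ext a b
    simp only [Matrix.mul_apply, Matrix.conjTranspose_apply, Matrix.smul_apply,
      Matrix.one_apply, smul_eq_mul]
    by_cases hab : a = b
    · subst hab
      have hterm : ∀ z : {z // z ∈ E}, star (M z a) * M z a = 1 := by
        intro z
        rw [hM, mul_comm]
        exact habs a.1 z.1
      rw [Finset.sum_congr rfl (fun z _ => hterm z), Finset.sum_const, Finset.card_univ,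
        Fintype.card_coe]
      simp [hc]
    · have horth := hpair.1 a.1 a.2 b.1 b.2 (fun h => hab (Subtype.ext h))
      have hsum0 : ∑ z : {z // z ∈ E}, star (M z a) * M z b = 0 := by
        have hconj := congrArg (starRingEnd ℂ) horth
        rw [map_sum, map_zero] at hconj
        rw [← hconj,
          ← Finset.sum_coe_sort E (fun z => (starRingEnd ℂ) (chr p a.1 z * (starRingEnd ℂ) (chr p b.1 z)))]
        refine Finset.sum_congr rfl fun z _ => ?_
        rw [_root_.map_mul, Complex.conj_conj]
        rfl
      rw [hsum0, if_neg hab, mul_zero]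
  -- transfer to square matrix
  have hcards : Fintype.card {a // a ∈ A} = Fintype.card {z // z ∈ E} := by
    rw [Fintype.card_coe, Fintype.card_coe, hcard]
  set e : {a // a ∈ A} ≃ {z // z ∈ E} := Fintype.equivOfCardEq hcards with he
  set N : Matrix {z // z ∈ E} {z // z ∈ E} ℂ := fun z w => M z (e.symm w) with hN
  have h2 : Nᴴ * N = c • 1 := by
    ext z w
    have := congrFun (congrFun h1 (e.symm z)) (e.symm w)
    simp only [Matrix.mul_apply, Matrix.conjTranspose_apply, Matrix.smul_apply,
      Matrix.one_apply, hN] at this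
    simp only [Matrix.mul_apply, Matrix.conjTranspose_apply, Matrix.smul_apply,
      Matrix.one_apply]
    rw [show (∑ j, star (N j z) * N j w) = _ from this]
    by_cases hzw : z = w
    · simp [hzw]
    · rw [if_neg hzw, if_neg (fun h => hzw (by simpa using congrArg e h))]
  have h3 : (c⁻¹ • Nᴴ) * N = 1 := by
    rw [Matrix.smul_mul, h2, smul_smul, inv_mul_cancel₀ hcne, one_smul]
  have h4 : N * Nᴴ = c • 1 := by
    have := mul_eq_one_comm.mp h3
    rw [Matrix.mul_smul] at this
    calc N * Nᴴ = c • (c⁻¹ • (N * Nᴴ)) := by rw [smul_smul, mul_inv_cancel₀ hcne, one_smul]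
    _ = c • (1 : Matrix _ _ ℂ) := by rw [this]
  -- extract entry
  have hxyE : (⟨x, hx⟩ : {z // z ∈ E}) ≠ ⟨y, hy⟩ := fun h => hxy (by simpa using h)
  have h5 := congrFun (congrFun h4 ⟨x, hx⟩) ⟨y, hy⟩
  simp only [Matrix.mul_apply, Matrix.conjTranspose_apply, Matrix.smul_apply,
    Matrix.one_apply, if_neg hxyE, smul_eq_mul, mul_zero] at h5
  -- h5 : ∑ w, N ⟨x,hx⟩ w * conj (N ⟨y,hy⟩ w) = 0
  have h6 : ∑ a : {a // a ∈ A}, chr p a.1 x * star (chr p a.1 y) = 0 := by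
    rw [← h5, ← Equiv.sum_comp e (fun w => N ⟨x, hx⟩ w * star (N ⟨y, hy⟩ w))]
    refine Finset.sum_congr rfl fun a _ => ?_
    simp [hN, hM]
  rw [← Finset.sum_coe_sort A (fun a => ee p (∑ i, a i * (x - y) i)), ← h6]
  refine Finset.sum_congr rfl fun a _ => ?_
  rw [show star (chr p a.1 y) = (starRingEnd ℂ) (chr p a.1 y) from rfl, chr_point_conj]

lemma key (p m : ℕ) (hp : p.Prime) (S T : Finset (Fin 3 → ZMod p))
    (hS : S.card = m * p) (hm : 2 ≤ m) (hm' : m ≤ p - 1)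
    (horth : ∀ a ∈ T, ∀ b ∈ T, a ≠ b → ∑ x ∈ S, ee p (∑ i, x i * (a - b) i) = 0)
    (W : Submodule (ZMod p) (Fin 3 → ZMod p))
    (hW : Module.finrank (ZMod p) W = 2) (v : Fin 3 → ZMod p) :
    ((T : Set (Fin 3 → ZMod p)) ∩ {x | x - v ∈ W}).ncard ≤ p := by
  classical
  haveI : Fact p.Prime := ⟨hp⟩
  haveI : NeZero p := ⟨hp.ne_zero⟩
  by_contra hbig
  push_neg at hbig
  set F : Finset (Fin 3 → ZMod p) := T.filter (fun x => x - v ∈ W) with hF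
  have hset : ((T : Set (Fin 3 → ZMod p)) ∩ {x | x - v ∈ W}) = ↑F := by
    ext z
    simp [hF, Set.mem_setOf_eq]
  rw [hset, Set.ncard_coe_finset] at hbig
  set b : Module.Basis (Fin 2) (ZMod p) W := Module.finBasisOfFinrankEq (ZMod p) W hW with hb
  set w₀ : Fin 3 → ZMod p := ((b 0 : W) : Fin 3 → ZMod p) with hw0
  set w₁ : Fin 3 → ZMod p := ((b 1 : W) : Fin 3 → ZMod p) with hw1
  set ξ : Option (ZMod p) → Fin 3 → ZMod p :=
    fun j => match j with
    | none => w₁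
    | some c => w₀ + c • w₁
    with hξ
  set rep : (Fin 3 → ZMod p) → Fin 2 → ZMod p :=
    fun x i => if h : x - v ∈ W then b.repr ⟨x - v, h⟩ i else 0 with hrep
  -- reconstruction
  have hrec : ∀ x ∈ F, ∀ y ∈ F,
      x - y = (rep x 0 - rep y 0) • w₀ + (rep x 1 - rep y 1) • w₁ := by
    intro x hx y hy
    have hxW : x - v ∈ W := (Finset.mem_filter.mp hx).2
    have hyW : y - v ∈ W := (Finset.mem_filter.mp hy).2
    have hrepx : ∀ i, rep x i = b.repr ⟨x - v, hxW⟩ i := by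
      intro i; rw [hrep]; simp [dif_pos hxW]
    have hrepy : ∀ i, rep y i = b.repr ⟨y - v, hyW⟩ i := by
      intro i; rw [hrep]; simp [dif_pos hyW]
    have hux : x - v = rep x 0 • w₀ + rep x 1 • w₁ := by
      have h := b.sum_repr ⟨x - v, hxW⟩
      rw [Fin.sum_univ_two] at h
      have h2 := congrArg (Subtype.val) h
      simp only [Submodule.coe_add, Submodule.coe_smul] at h2
      rw [hrepx 0, hrepx 1]
      exact h2.symm
    have huy : y - v = rep y 0 • w₀ + rep y 1 • w₁ := by
      have h := b.sum_repr ⟨y - v, hyW⟩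
      rw [Fin.sum_univ_two] at h
      have h2 := congrArg (Subtype.val) h
      simp only [Submodule.coe_add, Submodule.coe_smul] at h2
      rw [hrepy 0, hrepy 1]
      exact h2.symm
    have : x - y = (x - v) - (y - v) := by abel
    rw [this, hux, huy, sub_smul, sub_smul]
    abel
  -- pigeonhole in each direction
  have hdir : ∀ j : Option (ZMod p), ∃ d : ZMod p, d ≠ 0 ∧
      ∃ a ∈ T, ∃ c ∈ T, a ≠ c ∧ a - c = d • ξ j := by
    intro j
    have hcardlt : (Finset.univ : Finset (ZMod p)).card < F.card := by
      rw [Finset.card_univ, ZMod.card]; exact hbig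
    match j with
    | none =>
      obtain ⟨x, hx, y, hy, hxy, hgxy⟩ :=
        Finset.exists_ne_map_eq_of_card_lt_of_maps_to hcardlt
          (f := fun x => rep x 0) (fun a _ => Finset.mem_univ _)
      refine ⟨rep x 1 - rep y 1, ?_, x, (Finset.mem_filter.mp hx).1, y,
        (Finset.mem_filter.mp hy).1, hxy, ?_⟩
      · intro hd0
        apply hxy
        have := hrec x hx y hy
        rw [hd0, hgxy, sub_self, zero_smul, zero_smul, add_zero] at this
        have : x - y = 0 := this
        have := sub_eq_zero.mp this
        exact this
      · have := hrec x hx y hy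
        rw [hgxy, sub_self, zero_smul, zero_add] at this
        exact this
    | some c =>
      obtain ⟨x, hx, y, hy, hxy, hgxy⟩ :=
        Finset.exists_ne_map_eq_of_card_lt_of_maps_to hcardlt
          (f := fun x => rep x 1 - c * rep x 0) (fun a _ => Finset.mem_univ _)
      set d : ZMod p := rep x 0 - rep y 0 with hd
      have h11 : rep x 1 - rep y 1 = c * d := by
        rw [hd]; have := hgxy; ring_nf at this ⊢; linear_combination this
      refine ⟨d, ?_, x, (Finset.mem_filter.mp hx).1, y,
        (Finset.mem_filter.mp hy).1, hxy, ?_⟩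
      · intro hd0
        apply hxy
        have hr := hrec x hx y hy
        rw [← hd, hd0, h11, hd0, mul_zero, zero_smul, zero_smul, add_zero] at hr
        exact sub_eq_zero.mp hr
      · have hr := hrec x hx y hy
        rw [← hd, h11] at hr
        rw [hr]
        show d • w₀ + (c * d) • w₁ = d • (w₀ + c • w₁)
        rw [smul_add, smul_smul, mul_comm c d]
  -- fiber counts
  have hfib : ∀ j : Option (ZMod p),
      (S.filter (fun x => ∑ i, x i * (ξ j) i = 0)).card = m := by
    intro j
    obtain ⟨d, hd, a, haT, c, hcT, hac, heq⟩ := hdir j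
    have h0 := horth a haT c hcT hac
    have hq := equi p m hp S (fun x => ∑ i, x i * (a - c) i) hS h0 0
    rw [← hq]
    apply Finset.card_bij (fun x _ => x)
    · intro x hx
      obtain ⟨hxS, hx0⟩ := Finset.mem_filter.mp hx
      refine Finset.mem_filter.mpr ⟨hxS, ?_⟩
      rw [heq]
      have : ∀ i ∈ Finset.univ, x i * (d • ξ j) i = d * (x i * (ξ j) i) := by
        intro i _; simp [Pi.smul_apply, smul_eq_mul]; ring
      rw [Finset.sum_congr rfl this, ← Finset.mul_sum, hx0, mul_zero]
    · intro x hx y hy h; exact h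
    · intro x hx
      obtain ⟨hxS, hx0⟩ := Finset.mem_filter.mp hx
      refine ⟨x, Finset.mem_filter.mpr ⟨hxS, ?_⟩, rfl⟩
      rw [heq] at hx0
      have : ∀ i ∈ Finset.univ, x i * (d • ξ j) i = d * (x i * (ξ j) i) := by
        intro i _; simp [Pi.smul_apply, smul_eq_mul]; ring
      rw [Finset.sum_congr rfl this, ← Finset.mul_sum] at hx0
      rcases mul_eq_zero.mp hx0 with h | h
      · exact absurd h hd
      · exact h
  -- per-point count
  have hperx : ∀ x : Fin 3 → ZMod p,
      ∑ j : Option (ZMod p), (if ∑ i, x i * (ξ j) i = 0 then (1:ℕ) else 0)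
        = if (∑ i, x i * w₀ i = 0 ∧ ∑ i, x i * w₁ i = 0) then p + 1 else 1 := by
    intro x
    set α : ZMod p := ∑ i, x i * w₀ i with hα
    set β : ZMod p := ∑ i, x i * w₁ i with hβ
    rw [Fintype.sum_option]
    have hnone : (∑ i, x i * (ξ none) i) = β := rfl
    have hsome : ∀ c : ZMod p, (∑ i, x i * (ξ (some c)) i) = α + c * β := by
      intro c
      have : ∀ i ∈ Finset.univ, x i * (ξ (some c)) i
          = x i * w₀ i + c * (x i * w₁ i) := by
        intro i _
        show x i * (w₀ i + c • w₁ i) = _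
        simp [smul_eq_mul]; ring
      rw [Finset.sum_congr rfl this, Finset.sum_add_distrib, ← Finset.mul_sum, hα, hβ]
    rw [hnone]
    have hrw : ∀ c : ZMod p, (if ∑ i, x i * (ξ (some c)) i = 0 then (1:ℕ) else 0)
        = if α + c * β = 0 then 1 else 0 := by
      intro c; rw [hsome c]
    rw [Finset.sum_congr rfl (fun c _ => hrw c)]
    by_cases hb0 : β = 0
    · rw [if_pos hb0]
      by_cases ha0 : α = 0
      · rw [if_pos ⟨ha0, hb0⟩]
        have : ∀ c : ZMod p, (if α + c * β = 0 then (1:ℕ) else 0) = 1 := by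
          intro c; rw [if_pos (by rw [ha0, hb0, mul_zero, add_zero])]
        rw [Finset.sum_congr rfl (fun c _ => this c), Finset.sum_const, Finset.card_univ,
          ZMod.card, smul_eq_mul, mul_one]
        omega
      · rw [if_neg (fun h => ha0 h.1)]
        have : ∀ c : ZMod p, (if α + c * β = 0 then (1:ℕ) else 0) = 0 := by
          intro c; rw [if_neg (by rw [hb0, mul_zero, add_zero]; exact ha0)]
        rw [Finset.sum_congr rfl (fun c _ => this c), Finset.sum_const, smul_zero]
        omega
    · rw [if_neg hb0, if_neg (fun h => hb0 h.2)]
      have : ∀ c : ZMod p, (if α + c * β = 0 then (1:ℕ) else 0)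
          = if c = -α * β⁻¹ then 1 else 0 := by
        intro c
        congr 1
        apply propext
        constructor
        · intro h
          field_simp
          linear_combination h
        · intro h
          rw [h]
          field_simp
          ring
      rw [Finset.sum_congr rfl (fun c _ => this c),
        Finset.sum_ite_eq' Finset.univ (-α * β⁻¹) (fun _ => (1:ℕ)), if_pos (Finset.mem_univ _)]
  -- double counting
  set k : ℕ := (S.filter (fun x => ∑ i, x i * w₀ i = 0 ∧ ∑ i, x i * w₁ i = 0)).card with hk
  have hcount : (p + 1) * m = p * k + m * p := by
    have lhs1 : ∑ j : Option (ZMod p), (S.filter (fun x => ∑ i, x i * (ξ j) i = 0)).card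
        = (p + 1) * m := by
      rw [Finset.sum_congr rfl (fun j _ => hfib j), Finset.sum_const, Finset.card_univ,
        Fintype.card_option, ZMod.card, smul_eq_mul]
    have lhs2 : ∑ j : Option (ZMod p), (S.filter (fun x => ∑ i, x i * (ξ j) i = 0)).card
        = ∑ x ∈ S, ∑ j : Option (ZMod p), (if ∑ i, x i * (ξ j) i = 0 then (1:ℕ) else 0) := by
      rw [Finset.sum_comm]
      exact Finset.sum_congr rfl fun j _ => by rw [Finset.card_filter]
    have rhs : ∑ x ∈ S, ∑ j : Option (ZMod p), (if ∑ i, x i * (ξ j) i = 0 then (1:ℕ) else 0)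
        = p * k + m * p := by
      rw [Finset.sum_congr rfl (fun x _ => hperx x)]
      have : ∀ x ∈ S, (if (∑ i, x i * w₀ i = 0 ∧ ∑ i, x i * w₁ i = 0) then p + 1 else 1)
          = p * (if (∑ i, x i * w₀ i = 0 ∧ ∑ i, x i * w₁ i = 0) then 1 else 0) + 1 := by
        intro x _
        by_cases h : (∑ i, x i * w₀ i = 0 ∧ ∑ i, x i * w₁ i = 0) <;> simp [h]
      rw [Finset.sum_congr rfl this, Finset.sum_add_distrib, ← Finset.mul_sum,
        ← Finset.card_filter, Finset.sum_const, smul_eq_mul, mul_one, hS, ← hk]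
    rw [← lhs1, lhs2, rhs]
  have hmk : m = p * k := by
    have h1 : m + p * m = p * k + p * m := by
      calc m + p * m = (p + 1) * m := by ring
      _ = p * k + m * p := hcount
      _ = p * k + p * m := by ring
    exact Nat.add_right_cancel h1
  clear hξ hrep hrec hdir hfib hperx hcount hset hF hbig hk hb hw0 hw1
  clear ξ rep F
  clear_value k
  rcases Nat.eq_zero_or_pos k with hk0 | hkpos
  · rw [hk0, mul_zero] at hmk; omega
  · have hpk : p ≤ p * k := Nat.le_mul_of_pos_right p hkpos
    have hpm : p ≤ m := hmk ▸ hpk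
    have := hp.two_le
    omega

/-- If `(E, A)` is a spectral pair in `𝔽_p^3` (`p` an odd prime) with
`|E| = |A| = mp`, `2 ≤ m ≤ p - 1`, then every plane (coset of a two-dimensional
subspace) contains at most `p` points of `E`, and likewise for `A`. -/
theorem plane_concentration_bound (p m : ℕ) (hp : p.Prime) (hodd : Odd p)
    (E A : Finset (Fin 3 → ZMod p)) (hpair : IsSpectralPair p E A)
    (hE : E.card = m * p) (hA : A.card = m * p)
    (hm : 2 ≤ m) (hm' : m ≤ p - 1)
    (W : Submodule (ZMod p) (Fin 3 → ZMod p))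
    (hW : Module.finrank (ZMod p) W = 2) (v : Fin 3 → ZMod p) :
    ((E : Set (Fin 3 → ZMod p)) ∩ {x | x - v ∈ W}).ncard ≤ p ∧
    ((A : Set (Fin 3 → ZMod p)) ∩ {x | x - v ∈ W}).ncard ≤ p := by
  classical
  haveI : Fact p.Prime := ⟨hp⟩
  haveI : NeZero p := ⟨hp.ne_zero⟩
  constructor
  · -- bound for E, using orthogonality of rows (dual spectrum)
    have hne : E.card ≠ 0 := by
      rw [hE]
      exact Nat.mul_ne_zero (by omega) hp.ne_zero
    have horth := rows_orth p E A hpair (by rw [hE, hA]) hne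
    exact key p m hp A E hA hm hm' horth W hW v
  · -- bound for A, using orthogonality of columns
    have horth : ∀ a ∈ A, ∀ b ∈ A, a ≠ b →
        ∑ x ∈ E, ee p (∑ i, x i * (a - b) i) = 0 := by
      intro a ha b hb hab
      have h := hpair.1 a ha b hb hab
      rw [← h]
      exact Finset.sum_congr rfl fun x _ => (chr_mul_conj p a b x).symm
    exact key p m hp E A hE hm hm' horth W hW v
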